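/- With notation as in the mean value setting for a polygon, the gradient of the half-angle tangent tⱼ = tan(αⱼ/2), viewed as a function of x, is ∇tⱼ = (tⱼ/sin αⱼ)·(eⱼ^⊥/rⱼ − e_{j+1}^⊥/r_{j+1}), provided sin αⱼ ≠ 0. -/

import Mathlib

open Real

noncomputable abbrev E2 := EuclideanSpace ℝ (Fin 2)

/-- Rotation of a vector in `ℝ²` by `+π/2`. -/
noncomputable def perpE (v : E2) : E2 := WithLp.toLp 2 ![-(v 1), v 0]

/-- The 2D cross product. -/
noncomputable def crossE (v w : E2) : ℝ := v 0 * w 1 - v 1 * w 0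

/-- The 2D dot product. -/
noncomputable def dotE (v w : E2) : ℝ := v 0 * w 0 + v 1 * w 1

private lemma stmt14_aux (A0 A1 B0 B1 h0 h1 r s : ℝ) (hr : r ≠ 0) (hs : s ≠ 0)
  (hc : A0 * B1 - A1 * B0 ≠ 0)
  (hr2 : r ^ 2 = A0 * A0 + A1 * A1) (hs2 : s ^ 2 = B0 * B0 + B1 * B1) :
  (r * s - (A0 * B0 + A1 * B1)) * (A0 * B1 - A1 * B0)⁻¹ / (r⁻¹ * s⁻¹ * (A0 * B1 - A1 * B0)) * (r⁻¹ * -(r⁻¹ * A1) - s⁻¹ * -(s⁻¹ * B1)) * h0 +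
  (r * s - (A0 * B0 + A1 * B1)) * (A0 * B1 - A1 * B0)⁻¹ / (r⁻¹ * s⁻¹ * (A0 * B1 - A1 * B0)) * (r⁻¹ * (r⁻¹ * A0) - s⁻¹ * (s⁻¹ * B0)) * h1 =
  (r * s - (A0 * B0 + A1 * B1)) * (-((A0 * B1 - A1 * B0) ^ 2)⁻¹ * (A0 * (0 - h1) + B1 * (0 - h0) - (A1 * (0 - h0) + B0 * (0 - h1)))) +
  (A0 * B1 - A1 * B0)⁻¹ * (r * (1 / (2 * s) * (B0 * (0 - h0) + B0 * (0 - h0) + (B1 * (0 - h1) + B1 * (0 - h1)))) +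
      s * (1 / (2 * r) * (A0 * (0 - h0) + A0 * (0 - h0) + (A1 * (0 - h1) + A1 * (0 - h1)))) -
    (A0 * (0 - h0) + B0 * (0 - h0) + (A1 * (0 - h1) + B1 * (0 - h1)))) := by
  field_simp
  linear_combination (2*(r*s*(B1*h0 - B0*h1) - ((A0*h1 - A1*h0)+(B1*h0 - B0*h1))*s^2 - (A0*B0+A1*B1)*(B1*h0 - B0*h1) + (A0*B1-B0*A1)*(B0*h0+B1*h1)) * hr2 + 2*(r*s*(A0*h1 - A1*h0) - ((A0*h1 - A1*h0)+(B1*h0 - B0*h1))*(A0*A0+A1*A1) - (A0*B0+A1*B1)*(A0*h1 - A1*h0) + (A0*B1-B0*A1)*(A0*h0+A1*h1)) * hs2) / (A0*B1-B0*A1)^2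

set_option maxHeartbeats 1000000 in
/-- Gradient of the half-angle tangent `t_j(y) = tan(α_j(y)/2)
= (1 - e_j·e_{j+1})/(e_j × e_{j+1})`, where `e_j(y), e_{j+1}(y)` are the unit vectors
from `y` towards `p_j = a` and `p_{j+1} = b`:
`∇t_j = (t_j / sin α_j) (e_j^⊥/r_j - e_{j+1}^⊥/r_{j+1})`, provided `sin α_j ≠ 0`
(here `sin α_j = e_j × e_{j+1}`). -/
theorem stmt14 (a b x : E2) (ha : x ≠ a) (hb : x ≠ b)
    (t : E2 → ℝ)
    (ht : ∀ y, t y =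
      (1 - dotE (‖a - y‖⁻¹ • (a - y)) (‖b - y‖⁻¹ • (b - y))) /
        crossE (‖a - y‖⁻¹ • (a - y)) (‖b - y‖⁻¹ • (b - y)))
    (hs : crossE (‖a - x‖⁻¹ • (a - x)) (‖b - x‖⁻¹ • (b - x)) ≠ 0) :
    HasGradientAt t
      ((t x / crossE (‖a - x‖⁻¹ • (a - x)) (‖b - x‖⁻¹ • (b - x))) •
        (‖a - x‖⁻¹ • perpE (‖a - x‖⁻¹ • (a - x)) -
          ‖b - x‖⁻¹ • perpE (‖b - x‖⁻¹ • (b - x)))) x := by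
  have hax : a - x ≠ 0 := sub_ne_zero.mpr (Ne.symm ha)
  have hbx : b - x ≠ 0 := sub_ne_zero.mpr (Ne.symm hb)
  have hsub : ∀ (v w : E2) (i : Fin 2), (v - w) i = v i - w i := fun v w i => rfl
  have hnorm : ∀ y : E2, ‖y‖ = Real.sqrt (y 0 * y 0 + y 1 * y 1) := by
    intro y
    rw [EuclideanSpace.norm_eq, Fin.sum_univ_two]
    norm_num [Real.norm_eq_abs, sq_abs, sq]
  -- coordinate abbreviations as functions
  set QA : E2 → ℝ := fun y => (a 0 - y 0) * (a 0 - y 0) + (a 1 - y 1) * (a 1 - y 1) with hQAdef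
  set QB : E2 → ℝ := fun y => (b 0 - y 0) * (b 0 - y 0) + (b 1 - y 1) * (b 1 - y 1) with hQBdef
  set D : E2 → ℝ := fun y => (a 0 - y 0) * (b 0 - y 0) + (a 1 - y 1) * (b 1 - y 1) with hDdef
  set C : E2 → ℝ := fun y => (a 0 - y 0) * (b 1 - y 1) - (a 1 - y 1) * (b 0 - y 0) with hCdef
  have hna : ∀ y : E2, ‖a - y‖ = Real.sqrt (QA y) := by
    intro y; rw [hnorm, hsub, hsub, hQAdef]
  have hnb : ∀ y : E2, ‖b - y‖ = Real.sqrt (QB y) := by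
    intro y; rw [hnorm, hsub, hsub, hQBdef]
  have hQAx : QA x ≠ 0 := by
    intro h
    exact hax (norm_eq_zero.mp (by rw [hna, h, Real.sqrt_zero]))
  have hQBx : QB x ≠ 0 := by
    intro h
    exact hbx (norm_eq_zero.mp (by rw [hnb, h, Real.sqrt_zero]))
  have hQAnn : ∀ y, 0 ≤ QA y := fun y =>
    add_nonneg (mul_self_nonneg _) (mul_self_nonneg _)
  have hQBnn : ∀ y, 0 ≤ QB y := fun y =>
    add_nonneg (mul_self_nonneg _) (mul_self_nonneg _)
  have hra : Real.sqrt (QA x) ≠ 0 := by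
    simp [Real.sqrt_ne_zero' ]
    exact lt_of_le_of_ne (hQAnn x) (Ne.symm hQAx)
  have hrb : Real.sqrt (QB x) ≠ 0 := by
    simp [Real.sqrt_ne_zero' ]
    exact lt_of_le_of_ne (hQBnn x) (Ne.symm hQBx)
  have hcrossy : ∀ y : E2, crossE (‖a - y‖⁻¹ • (a - y)) (‖b - y‖⁻¹ • (b - y))
      = ‖a - y‖⁻¹ * ‖b - y‖⁻¹ * C y := by
    intro y
    simp only [crossE, PiLp.smul_apply, smul_eq_mul, hsub, hCdef]
    ring
  have hdoty : ∀ y : E2, dotE (‖a - y‖⁻¹ • (a - y)) (‖b - y‖⁻¹ • (b - y))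
      = ‖a - y‖⁻¹ * ‖b - y‖⁻¹ * D y := by
    intro y
    simp only [dotE, PiLp.smul_apply, smul_eq_mul, hsub, hDdef]
    ring
  have hCx : C x ≠ 0 := by
    intro h
    rw [hcrossy, h, mul_zero] at hs
    exact hs rfl
  have heqy : ∀ y : E2, QA y ≠ 0 → QB y ≠ 0 → t y = (Real.sqrt (QA y) * Real.sqrt (QB y) - D y) * (C y)⁻¹ := by
    intro y h1 h2
    have hra' : Real.sqrt (QA y) ≠ 0 :=
      Real.sqrt_ne_zero'.mpr (lt_of_le_of_ne (hQAnn y) (Ne.symm h1))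
    have hrb' : Real.sqrt (QB y) ≠ 0 :=
      Real.sqrt_ne_zero'.mpr (lt_of_le_of_ne (hQBnn y) (Ne.symm h2))
    rw [ht y, hcrossy, hdoty, hna, hnb,
      show (Real.sqrt (QA y) * Real.sqrt (QB y) - D y) * (C y)⁻¹
        = (Real.sqrt (QA y) * Real.sqrt (QB y) - D y) / C y from (div_eq_mul_inv _ _).symm]
    rw [show (1 : ℝ) - (Real.sqrt (QA y))⁻¹ * (Real.sqrt (QB y))⁻¹ * D y
        = ((Real.sqrt (QA y))⁻¹ * (Real.sqrt (QB y))⁻¹) *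
          (Real.sqrt (QA y) * Real.sqrt (QB y) - D y) by field_simp]
    rw [mul_assoc (Real.sqrt (QA y))⁻¹ (Real.sqrt (QB y))⁻¹ (C y),
      ← mul_assoc (Real.sqrt (QA y))⁻¹ (Real.sqrt (QB y))⁻¹ (C y)]
    exact mul_div_mul_left _ _ (mul_ne_zero (inv_ne_zero hra') (inv_ne_zero hrb'))
  have hev : t =ᶠ[nhds x] (fun y => (Real.sqrt (QA y) * Real.sqrt (QB y) - D y) * (C y)⁻¹) := by
    have c1 : ContinuousAt QA x := by fun_prop
    have c2 : ContinuousAt QB x := by fun_prop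
    filter_upwards [c1.eventually_ne hQAx, c2.eventually_ne hQBx] with y h1 h2
    exact heqy y h1 h2
  -- derivatives
  have hp0 : HasFDerivAt (𝕜 := ℝ) (E := E2) (F := ℝ) (fun y => y 0) (EuclideanSpace.proj (0 : Fin 2)) x :=
    by simpa [PiLp.proj_apply] using (EuclideanSpace.proj (0 : Fin 2) : E2 →L[ℝ] ℝ).hasFDerivAt (x := x)
  have hp1 : HasFDerivAt (𝕜 := ℝ) (E := E2) (F := ℝ) (fun y => y 1) (EuclideanSpace.proj (1 : Fin 2)) x :=
    by simpa [PiLp.proj_apply] using (EuclideanSpace.proj (1 : Fin 2) : E2 →L[ℝ] ℝ).hasFDerivAt (x := x)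
  have hA0 := (hasFDerivAt_const (a 0) x).sub hp0
  have hA1 := (hasFDerivAt_const (a 1) x).sub hp1
  have hB0 := (hasFDerivAt_const (b 0) x).sub hp0
  have hB1 := (hasFDerivAt_const (b 1) x).sub hp1
  have hQA2 := (hA0.mul hA0).add (hA1.mul hA1)
  have hQB2 := (hB0.mul hB0).add (hB1.mul hB1)
  have hsA := hQA2.sqrt hQAx
  have hsB := hQB2.sqrt hQBx
  have hN := hsA.mul hsB
  have hD' := (hA0.mul hB0).add (hA1.mul hB1)
  have hC' := (hA0.mul hB1).sub (hA1.mul hB0)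
  have hInv := (hasDerivAt_inv hCx).comp_hasFDerivAt x hC'
  have hF' := (hN.sub hD').mul hInv
  refine HasGradientAt.congr_of_eventuallyEq ?_ hev
  rw [hasGradientAt_iff_hasFDerivAt]
  convert hF' using 1
  · rfl
  · rfl
  rw [heqy x hQAx hQBx, hcrossy x, hna x, hnb x]
  refine ContinuousLinearMap.ext fun h => ?_
  simp only [InnerProductSpace.toDual_apply_apply, PiLp.inner_apply, RCLike.inner_apply,
    starRingEnd_apply, star_trivial, Fin.sum_univ_two, perpE,
    PiLp.smul_apply, PiLp.sub_apply, smul_eq_mul,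
    ContinuousLinearMap.add_apply, ContinuousLinearMap.sub_apply,
    ContinuousLinearMap.smul_apply, ContinuousLinearMap.zero_apply,
    ContinuousLinearMap.coe_smul', Pi.smul_apply, PiLp.proj_apply,
    Matrix.cons_val_zero, Matrix.cons_val_one, Matrix.head_cons]
  simp only [hDdef, hCdef, Function.comp]
  have hr2 : Real.sqrt (QA x) ^ 2 = (a 0 - x 0) * (a 0 - x 0) + (a 1 - x 1) * (a 1 - x 1) := by
    rw [Real.sq_sqrt (hQAnn x), hQAdef]
  have hs2 : Real.sqrt (QB x) ^ 2 = (b 0 - x 0) * (b 0 - x 0) + (b 1 - x 1) * (b 1 - x 1) := by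
    rw [Real.sq_sqrt (hQBnn x), hQBdef]
  rw [mul_comm (h 0), mul_comm (h 1)]
  exact stmt14_aux (a 0 - x 0) (a 1 - x 1) (b 0 - x 0) (b 1 - x 1) (h 0) (h 1)
    (Real.sqrt (QA x)) (Real.sqrt (QB x)) hra hrb hCx hr2 hs2
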